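/- Let x₀ ∈ (0,∞] and let F : [0,x₀) → ℝ be a C² function with F(0) = F'(0) = 0 and F'' ≥ 0 on [0,x₀). Define v(x) = ∫₀^x 2τ √(1 + F'(τ)²) dτ. Then for every integer m ≥ 1 and every x ∈ (0,x₀), ∫₀^x [F'(τ) F''(τ) / (1 + F'(τ)²)^{3/2}] · v(τ)^m dτ ≤ v(x)^m. -/

import Mathlib

open MeasureTheory Filter Set

/-- Let `x₀ ∈ (0,∞]` and `F` a `C²` function on `[0,x₀)` with `F(0) = F'(0) = 0` and
`F'' ≥ 0`, and set `v(x) = ∫₀^x 2τ√(1+F'(τ)²) dτ`. Then for every integer `m ≥ 1` and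
`x ∈ (0,x₀)`, `∫₀^x [F'F''/(1+F'²)^{3/2}] v^m dτ ≤ v(x)^m`. -/
theorem stmt12 (x₀ : EReal) (hx₀ : 0 < x₀)
    (F F' F'' : ℝ → ℝ)
    (hF' : ∀ x : ℝ, 0 ≤ x → (x : EReal) < x₀ → HasDerivAt F (F' x) x)
    (hF'' : ∀ x : ℝ, 0 ≤ x → (x : EReal) < x₀ → HasDerivAt F' (F'' x) x)
    (hF''cont : ContinuousOn F'' {x : ℝ | 0 ≤ x ∧ (x : EReal) < x₀})
    (hF0 : F 0 = 0) (hF'0 : F' 0 = 0)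
    (hconv : ∀ x : ℝ, 0 ≤ x → (x : EReal) < x₀ → 0 ≤ F'' x)
    (v : ℝ → ℝ) (hv : ∀ x, v x = ∫ τ in (0 : ℝ)..x, 2 * τ * Real.sqrt (1 + F' τ ^ 2)) :
    ∀ m : ℕ, 1 ≤ m → ∀ x : ℝ, 0 < x → (x : EReal) < x₀ →
      (∫ τ in (0 : ℝ)..x,
          F' τ * F'' τ / (1 + F' τ ^ 2) ^ ((3 : ℝ) / 2) * v τ ^ m) ≤ v x ^ m := by
  intro m hm x hx hxx₀
  have hle : ∀ τ : ℝ, τ ≤ x → (τ : EReal) < x₀ := fun τ hτ =>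
    lt_of_le_of_lt (EReal.coe_le_coe_iff.mpr hτ) hxx₀
  set S := Icc (0:ℝ) x with hS
  have hSsub : S ⊆ {y : ℝ | 0 ≤ y ∧ (y : EReal) < x₀} := fun y hy => ⟨hy.1, hle y hy.2⟩
  have hF'c : ContinuousOn F' S := fun y hy =>
    ((hF'' y (hSsub hy).1 (hSsub hy).2).continuousAt).continuousWithinAt
  have hF''c : ContinuousOn F'' S := hF''cont.mono hSsub
  -- positivity of 1 + F'²
  have hu : ∀ τ : ℝ, (0:ℝ) < 1 + F' τ ^ 2 := fun τ => by positivity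
  -- F' nonneg on S
  have hF'mono : MonotoneOn F' S := by
    apply monotoneOn_of_deriv_nonneg (convex_Icc 0 x) hF'c
    · intro y hy
      rw [interior_Icc] at hy
      exact (hF'' y hy.1.le (hle y hy.2.le)).differentiableAt.differentiableWithinAt
    · intro y hy
      rw [interior_Icc] at hy
      rw [(hF'' y hy.1.le (hle y hy.2.le)).deriv]
      exact hconv y hy.1.le (hle y hy.2.le)
  have hF'nonneg : ∀ τ ∈ S, 0 ≤ F' τ := fun τ hτ => by
    have := hF'mono ⟨le_refl 0, hx.le⟩ hτ hτ.1
    rwa [hF'0] at this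
  -- the weight w
  set w : ℝ → ℝ := fun τ => 2 * τ * Real.sqrt (1 + F' τ ^ 2) with hw
  have hwc : ContinuousOn w S := by
    apply (continuousOn_const.mul continuousOn_id).mul
    exact (continuousOn_const.add (hF'c.pow 2)).sqrt
  have hwint : IntervalIntegrable w volume 0 x := hwc.intervalIntegrable_of_Icc hx.le
  have hwnonneg : ∀ τ ∈ S, 0 ≤ w τ := fun τ hτ => by
    have h1 := Real.sqrt_nonneg (1 + F' τ ^ 2)
    have h2 := hτ.1
    positivity
  -- v facts
  have hvc : ContinuousOn v S := by
    have : IntegrableOn w (uIcc 0 x) volume := by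
      rw [uIcc_of_le hx.le]; exact hwc.integrableOn_Icc
    have h := intervalIntegral.continuousOn_primitive_interval this
    rw [uIcc_of_le hx.le] at h
    exact h.congr (fun y hy => hv y)
  have hvmono : ∀ τ ∈ S, v τ ≤ v x := by
    intro τ hτ
    rw [hv τ, hv x]
    have h1 : IntervalIntegrable w volume 0 τ :=
      hwint.mono_set (by rw [uIcc_of_le hτ.1, uIcc_of_le hx.le]; exact Icc_subset_Icc le_rfl hτ.2)
    have h2 : IntervalIntegrable w volume τ x :=
      hwint.mono_set (by rw [uIcc_of_le hτ.2, uIcc_of_le hx.le]; exact Icc_subset_Icc hτ.1 le_rfl)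
    rw [← intervalIntegral.integral_add_adjacent_intervals h1 h2]
    have : 0 ≤ ∫ t in τ..x, w t := by
      apply intervalIntegral.integral_nonneg hτ.2
      intro t ht; exact hwnonneg t ⟨hτ.1.trans ht.1, ht.2⟩
    linarith
  have hvnonneg : ∀ τ ∈ S, 0 ≤ v τ := by
    intro τ hτ
    rw [hv τ]
    apply intervalIntegral.integral_nonneg hτ.1
    intro t ht; exact hwnonneg t ⟨ht.1, ht.2.trans hτ.2⟩
  -- the antiderivative g
  set A : ℝ → ℝ := fun τ => F' τ * F'' τ / (1 + F' τ ^ 2) ^ ((3:ℝ)/2) with hA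
  set g : ℝ → ℝ := fun τ => -(Real.sqrt (1 + F' τ ^ 2))⁻¹ with hg
  have hgderiv : ∀ τ ∈ S, HasDerivAt g (A τ) τ := by
    intro τ hτ
    have hu' : (0:ℝ) < 1 + F' τ ^ 2 := hu τ
    have hs : Real.sqrt (1 + F' τ ^ 2) ≠ 0 := by positivity
    have h1 : HasDerivAt (fun y => 1 + F' y ^ 2) (2 * F' τ * F'' τ) τ := by
      have := ((hF'' τ (hSsub hτ).1 (hSsub hτ).2).pow 2).const_add 1
      exact this.congr_deriv (by simp)
    have h2 := (h1.sqrt (by positivity)).inv hs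
    have h3 := h2.neg
    refine h3.congr_deriv ?_; symm
    have hsq : Real.sqrt (1 + F' τ ^ 2) ^ 2 = 1 + F' τ ^ 2 := Real.sq_sqrt hu'.le
    rw [hA]
    have hr : (1 + F' τ ^ 2) ^ ((3:ℝ)/2)
        = (1 + F' τ ^ 2) * Real.sqrt (1 + F' τ ^ 2) := by
      rw [show (3:ℝ)/2 = 1 + 1/2 by norm_num, Real.rpow_add hu', Real.rpow_one,
        ← Real.sqrt_eq_rpow]
    simp only [hr]
    rw [hsq]
    field_simp
  have hAc : ContinuousOn A S := by
    apply (hF'c.mul hF''c).div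
    · exact (continuousOn_const.add (hF'c.pow 2)).rpow_const
        (fun y hy => Or.inl (ne_of_gt (hu y)))
    · intro y hy
      exact ne_of_gt (Real.rpow_pos_of_pos (hu y) _)
  have hAnonneg : ∀ τ ∈ S, 0 ≤ A τ := by
    intro τ hτ
    apply div_nonneg (mul_nonneg (hF'nonneg τ hτ) (hconv τ (hSsub hτ).1 (hSsub hτ).2))
    exact (Real.rpow_pos_of_pos (hu τ) _).le
  -- integrability
  have hint1 : IntervalIntegrable (fun τ => A τ * v τ ^ m) volume 0 x :=
    (hAc.mul (hvc.pow m)).intervalIntegrable_of_Icc hx.le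
  have hint2 : IntervalIntegrable (fun τ => A τ * v x ^ m) volume 0 x :=
    (hAc.mul continuousOn_const).intervalIntegrable_of_Icc hx.le
  have hAint : IntervalIntegrable A volume 0 x := hAc.intervalIntegrable_of_Icc hx.le
  -- compare
  have key : (∫ τ in (0:ℝ)..x, A τ * v τ ^ m) ≤ ∫ τ in (0:ℝ)..x, A τ * v x ^ m := by
    apply intervalIntegral.integral_mono_on hx.le hint1 hint2
    intro τ hτ
    exact mul_le_mul_of_nonneg_left
      (pow_le_pow_left₀ (hvnonneg τ hτ) (hvmono τ hτ) m) (hAnonneg τ hτ)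
  have hftc : (∫ τ in (0:ℝ)..x, A τ) = g x - g 0 := by
    apply intervalIntegral.integral_eq_sub_of_hasDerivAt
    · intro τ hτ
      rw [uIcc_of_le hx.le] at hτ
      exact hgderiv τ hτ
    · exact hAint
  have hgx : g x - g 0 ≤ 1 := by
    rw [hg]
    simp only [hF'0]
    have h0 : Real.sqrt (1 + (0:ℝ) ^ 2) = 1 := by norm_num
    rw [h0]
    have : 0 ≤ (Real.sqrt (1 + F' x ^ 2))⁻¹ := by positivity
    simp only [inv_one]
    linarith
  calc (∫ τ in (0:ℝ)..x, A τ * v τ ^ m) ≤ ∫ τ in (0:ℝ)..x, A τ * v x ^ m := key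
    _ = (∫ τ in (0:ℝ)..x, A τ) * v x ^ m := intervalIntegral.integral_mul_const _ _
    _ = (g x - g 0) * v x ^ m := by rw [hftc]
    _ ≤ 1 * v x ^ m := by
        apply mul_le_mul_of_nonneg_right hgx
        exact pow_nonneg (hvnonneg x ⟨hx.le, le_rfl⟩) m
    _ = v x ^ m := one_mul _
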